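/- Let (C, m_C) → (B, m_B) be a surjective local homomorphism h of noetherian local rings, and suppose there is a noetherian local ring (A, m_A) with flat local homomorphisms g : A → C and f : A → B satisfying f = h∘g. If h induces an isomorphism C/m_A C ≅ B/m_A B, then h is an isomorphism. -/

import Mathlib

universe u v

/-- Universe-polymorphic equational criterion for flatness (derived from the
single-universe version in mathlib via `ULift`). -/
lemma aux_trivial_rel {R : Type u} {M : Type v} [CommRing R] [AddCommGroup M] [Module R M]
    [Module.Flat R M] {n : ℕ} (a : Fin n → R) (b : Fin n → M)
    (hrel : ∑ i, a i • b i = 0) :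
    ∃ (m : ℕ) (d : Fin n → Fin m → R) (y : Fin m → M),
      (∀ i, b i = ∑ j, d i j • y j) ∧ ∀ j, ∑ i, a i * d i j = 0 := by
  letI : Algebra (ULift.{v} R) R := (ULift.ringEquiv (R := R)).toRingHom.toAlgebra
  letI : Module (ULift.{v} R) M := Module.compHom M (algebraMap (ULift.{v} R) R)
  haveI : IsScalarTower (ULift.{v} R) R M :=
    ⟨fun u r m => by
      show (u.down * r) • m = u.down • (r • m)
      rw [mul_smul]⟩
  haveI flat1 : Module.Flat (ULift.{v} R) R := by
    refine Module.Flat.of_linearEquiv (R := ULift.{v} R) (M := ULift.{v} R) (N := R) ?_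
    exact { toFun := ULift.up, invFun := ULift.down,
            left_inv := fun _ => rfl, right_inv := fun _ => rfl,
            map_add' := fun _ _ => rfl, map_smul' := fun _ _ => rfl }
  haveI flat2 : Module.Flat (ULift.{v} R) M := @Module.Flat.trans (ULift.{v} R) R M _ _ _ _ _ _ this flat1 _
  letI : Module (ULift.{v} R) (ULift.{u} M) :=
    Module.compHom (ULift.{u} M) (algebraMap (ULift.{v} R) R)
  haveI flat3 : Module.Flat (ULift.{v} R) (ULift.{u} M) := by
    refine Module.Flat.of_linearEquiv (R := ULift.{v} R) (M := M) (N := ULift.{u} M) ?_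
    exact { toFun := ULift.down, invFun := ULift.up,
            left_inv := fun _ => rfl, right_inv := fun _ => rfl,
            map_add' := fun _ _ => rfl, map_smul' := fun _ _ => rfl }
  let downM : ULift.{u} M →+ M :=
    { toFun := ULift.down, map_zero' := rfl, map_add' := fun _ _ => rfl }
  let upM : M →+ ULift.{u} M :=
    { toFun := ULift.up, map_zero' := rfl, map_add' := fun _ _ => rfl }
  let downR : ULift.{v} R →+ R :=
    { toFun := ULift.down, map_zero' := rfl, map_add' := fun _ _ => rfl }
  set F : ULift.{max u v} (Fin n) → ULift.{v} R := fun i => ULift.up (a i.down) with hF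
  set X : ULift.{max u v} (Fin n) → ULift.{u} M := fun i => ULift.up (b i.down) with hX
  have hrel' : ∑ i, F i • X i = 0 := by
    have step1 : ∑ i : ULift.{max u v} (Fin n), F i • X i
        = ∑ i : Fin n, upM (a i • b i) :=
      Fintype.sum_equiv (Equiv.ulift (α := Fin n)) _ _ (fun _ => rfl)
    rw [step1, ← map_sum upM _ Finset.univ, hrel, map_zero]
  obtain ⟨k, d, y, h1, h2⟩ :=
    Module.Flat.isTrivialRelation_of_sum_smul_eq_zero (M := ULift.{u} M) hrel'
  classical
  let κ := Fin k
  let e : κ ≃ Fin (Fintype.card κ) := Fintype.equivFin κ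
  refine ⟨Fintype.card κ, fun i j => (d (ULift.up i) (e.symm j)).down,
    fun j => (y (e.symm j)).down, fun i => ?_, fun j => ?_⟩
  · have hdown := congrArg ULift.down (h1 (ULift.up i))
    have hsum : (∑ j, d (ULift.up i) j • y j).down
        = ∑ j, (d (ULift.up i) j).down • (y j).down :=
      map_sum downM (fun j => d (ULift.up i) j • y j) Finset.univ
    replace hdown := hdown.trans hsum
    have reidx : (∑ j : κ, (d (ULift.up i) j).down • (y j).down)
        = ∑ j : Fin (Fintype.card κ), (d (ULift.up i) (e.symm j)).down • (y (e.symm j)).down :=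
      (Fintype.sum_equiv e.symm _ _ (fun _ => rfl)).symm
    exact hdown.trans reidx
  · have hdown := congrArg ULift.down (h2 (e.symm j))
    have hsum : (∑ i, F i * d i (e.symm j)).down
        = ∑ i, (F i).down * (d i (e.symm j)).down :=
      map_sum downR (fun i => F i * d i (e.symm j)) Finset.univ
    rw [hsum] at hdown
    have reidx : (∑ i : Fin n, a i * (d (ULift.up i) (e.symm j)).down)
        = ∑ i : ULift.{max u v} (Fin n), (F i).down * (d i (e.symm j)).down :=
      Fintype.sum_equiv (Equiv.ulift (α := Fin n)).symm _ _ (fun _ => rfl)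
    exact reidx.trans hdown

/-- Let `h : (C, m_C) → (B, m_B)` be a surjective local homomorphism of noetherian
local rings, and suppose there is a noetherian local ring `(A, m_A)` with flat local
homomorphisms `g : A → C` and `f : A → B` satisfying `f = h ∘ g`.  If `h` induces an
isomorphism `C/m_A C ≅ B/m_A B`, then `h` is an isomorphism (bijective). -/
theorem surjective_flat_local_hom_bijective
    (A B C : Type*) [CommRing A] [IsLocalRing A] [IsNoetherianRing A]
    [CommRing B] [IsLocalRing B] [IsNoetherianRing B]
    [CommRing C] [IsLocalRing C] [IsNoetherianRing C]
    (g : A →+* C) (f : A →+* B) (h : C →+* B)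
    [IsLocalHom g] [IsLocalHom f] [IsLocalHom h]
    (hcomp : f = h.comp g)
    (hg : @Module.Flat A C _ _ g.toModule)
    (hf : @Module.Flat A B _ _ f.toModule)
    (hsurj : Function.Surjective h)
    (hle : Ideal.map g (IsLocalRing.maximalIdeal A) ≤
      Ideal.comap h (Ideal.map f (IsLocalRing.maximalIdeal A)))
    (hiso : Function.Bijective
      (Ideal.quotientMap (Ideal.map f (IsLocalRing.maximalIdeal A)) h hle)) :
    Function.Bijective h := by
  classical
  letI : Module A B := f.toModule
  haveI : Module.Flat A B := hf
  set mA := IsLocalRing.maximalIdeal A with hmA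
  set K := RingHom.ker h with hK
  set I := Ideal.map g mA with hI
  refine ⟨?_, hsurj⟩
  rw [RingHom.injective_iff_ker_eq_bot]
  -- main step: K ≤ I • K
  have hKle : K ≤ I • K := by
    intro x hx
    have hhx : h x = 0 := RingHom.mem_ker.mp hx
    -- x ∈ I
    have hxI : x ∈ I := by
      have h0 : Ideal.quotientMap (Ideal.map f mA) h hle (Ideal.Quotient.mk _ x) = 0 := by
        rw [Ideal.quotientMap_mk, hhx, map_zero]
      have : Ideal.Quotient.mk I x = 0 := hiso.1 (by rw [h0, map_zero])
      exact Ideal.Quotient.eq_zero_iff_mem.mp this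
    -- write x as a finite combination
    have hxspan : x ∈ Submodule.span C (g '' (mA : Set A)) := hxI
    obtain ⟨n, c, v, hsum⟩ := Submodule.mem_span_set'.mp hxspan
    choose a ha hga using fun i => (v i).2
    -- the relation in B
    have hrelB : ∑ i, a i • h (c i) = 0 := by
      have key : ∑ i, a i • h (c i) = h x := by
        rw [← hsum, map_sum]
        refine Finset.sum_congr rfl fun i _ => ?_
        show f (a i) * h (c i) = h (c i • (v i : C))
        rw [smul_eq_mul, map_mul, hcomp, RingHom.comp_apply, hga i, mul_comm]
      rw [key, hhx]
    obtain ⟨m, d, y, h1, h2⟩ := aux_trivial_rel a (fun i => h (c i)) hrelB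
    choose z hz using fun j => hsurj (y j)
    set w : Fin n → C := fun i => c i - ∑ j, g (d i j) * z j with hw
    have hwK : ∀ i, w i ∈ K := by
      intro i
      rw [RingHom.mem_ker]
      have : h (w i) = h (c i) - ∑ j, f (d i j) * y j := by
        simp only [hw, map_sub, map_sum, map_mul, hcomp, RingHom.comp_apply, hz]
      rw [this, h1 i]
      simp [sub_eq_zero]
      rfl
    have hxe : x = ∑ i, g (a i) * w i := by
      have expand : ∑ i, g (a i) * w i
          = (∑ i, g (a i) * c i) - ∑ j, g (∑ i, a i * d i j) * z j := by
        simp only [hw, mul_sub, Finset.mul_sum, Finset.sum_sub_distrib]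
        congr 1
        rw [Finset.sum_comm]
        refine Finset.sum_congr rfl fun j _ => ?_
        rw [map_sum, Finset.sum_mul]
        exact Finset.sum_congr rfl fun i _ => by rw [map_mul, mul_assoc]
      have hzero : ∀ j, g (∑ i, a i * d i j) = 0 := fun j => by rw [h2 j, map_zero]
      simp only [expand, hzero, zero_mul, Finset.sum_const_zero, sub_zero]
      rw [← hsum]
      exact Finset.sum_congr rfl fun i _ => by rw [smul_eq_mul, hga i, mul_comm]
    rw [hxe]
    exact Submodule.sum_mem _ fun i _ =>
      Submodule.smul_mem_smul (Ideal.mem_map_of_mem g (ha i)) (hwK i)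
  -- Nakayama
  have hKfg : K.FG := IsNoetherian.noetherian K
  have hIjac : I ≤ Ideal.jacobson ⊥ := by
    rw [IsLocalRing.jacobson_eq_maximalIdeal ⊥ bot_ne_top]
    rw [Ideal.map_le_iff_le_comap]
    intro r hr
    simp only [Ideal.mem_comap, IsLocalRing.mem_maximalIdeal, mem_nonunits_iff]
    intro hu
    exact (IsLocalRing.mem_maximalIdeal r).mp hr (IsLocalHom.map_nonunit r hu)
  exact Submodule.eq_bot_of_le_smul_of_le_jacobson_bot I K hKfg hKle hIjac
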